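/- Forward move F1: If (α_n)_{n≥0}, (β_n)_{n≥0} form a Bailey pair with respect to base a (and a q^m ≠ 1 for all m ≥ 1), then the sequences β'_n = Σ_{j=0}^{n} (a^j q^{j²} / (q;q)_{n−j}) β_j and α'_n = a^n q^{n²} α_n also form a Bailey pair with respect to base a. -/

import Mathlib

open Finset

noncomputable def qPoch (a q : ℂ) (n : ℕ) : ℂ :=
  ∏ t ∈ Finset.range n, (1 - a * q ^ t)

noncomputable def qPochInf (a q : ℂ) : ℂ :=
  ∏' t : ℕ, (1 - a * q ^ t)

def IsBaileyPair (q a : ℂ) (α β : ℕ → ℂ) : Prop :=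
  ∀ n : ℕ, β n =
    ∑ t ∈ Finset.range (n + 1), α t / (qPoch q q (n - t) * qPoch (a * q) q (n + t))


lemma qPoch_zero (a q : ℂ) : qPoch a q 0 = 1 := by simp [qPoch]

lemma qPoch_succ (a q : ℂ) (n : ℕ) :
    qPoch a q (n+1) = qPoch a q n * (1 - a * q ^ n) := by
  simp [qPoch, Finset.prod_range_succ]

lemma qPoch_succ' (a q : ℂ) (n : ℕ) :
    qPoch a q (n+1) = (1 - a) * qPoch (a*q) q n := by
  rw [qPoch, Finset.prod_range_succ']
  simp only [pow_zero, mul_one]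
  rw [mul_comm]
  congr 1
  exact Finset.prod_congr rfl fun t _ => by rw [pow_succ]; ring

lemma qPoch_add (a q : ℂ) (m k : ℕ) :
    qPoch a q (m + k) = qPoch a q m * qPoch (a * q ^ m) q k := by
  rw [qPoch, Finset.prod_range_add, qPoch, qPoch]
  congr 1
  exact Finset.prod_congr rfl fun t _ => by rw [pow_add]; ring

lemma q_pow_ne_one {q : ℂ} (hq1 : ‖q‖ < 1) {m : ℕ} (hm : 1 ≤ m) :
    q ^ m ≠ 1 := by
  intro h
  have := congrArg norm h
  rw [norm_pow, norm_one] at this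
  have hlt : ‖q‖ ^ m < 1 :=
    pow_lt_one₀ (norm_nonneg q) hq1 (by omega)
  rw [this] at hlt
  exact lt_irrefl 1 hlt

lemma one_sub_q_pow_ne {q : ℂ} (hq1 : ‖q‖ < 1) {m : ℕ} (hm : 1 ≤ m) :
    (1 : ℂ) - q ^ m ≠ 0 :=
  sub_ne_zero.mpr fun h => q_pow_ne_one hq1 hm h.symm

lemma qq_ne {q : ℂ} (hq1 : ‖q‖ < 1) (n : ℕ) : qPoch q q n ≠ 0 := by
  rw [qPoch]
  refine Finset.prod_ne_zero_iff.mpr fun t _ => ?_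
  rw [← pow_succ']
  exact one_sub_q_pow_ne hq1 (by omega)

lemma bq_ne {q b : ℂ} (hb : ∀ m : ℕ, 1 ≤ m → b * q ^ m ≠ 1) (n : ℕ) :
    qPoch (b * q) q n ≠ 0 := by
  rw [qPoch]
  refine Finset.prod_ne_zero_iff.mpr fun t _ => ?_
  refine sub_ne_zero.mpr fun h => hb (t+1) (by omega) ?_
  rw [pow_succ']
  linear_combination -h

lemma one_sub_b_ne {q b : ℂ} (hb : ∀ m : ℕ, 1 ≤ m → b * q ^ m ≠ 1) (m : ℕ) (hm : 1 ≤ m) :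
    (1 : ℂ) - b * q ^ m ≠ 0 :=
  sub_ne_zero.mpr fun h => hb m hm h.symm

lemma pascal_alg (B d1 d2 d3 x y : ℂ) (hd1 : d1 ≠ 0) (hd2 : d2 ≠ 0) (hd3 : d3 ≠ 0)
    (hy : 1 - y ≠ 0) :
    (1 - x*y) * (B / (d1 * (d2 * (1-y)) * d3))
      = B * y * (1 - x) / (d1 * (d2 * (1-y)) * d3)
        + B / (d1 * d2 * d3) := by
  have hD : d1 * (d2 * (1-y)) * d3 ≠ 0 :=
    mul_ne_zero (mul_ne_zero hd1 (mul_ne_zero hd2 hy)) hd3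
  have hD' : d1 * d2 * d3 ≠ 0 := mul_ne_zero (mul_ne_zero hd1 hd2) hd3
  have h1 : B / (d1 * d2 * d3) = B * (1-y) / (d1 * (d2 * (1-y)) * d3) := by
    rw [div_eq_div_iff hD' hD]; ring
  rw [h1, ← add_div, ← mul_div_assoc]
  congr 1
  ring

lemma comb_alg (P y z d1 d2 d3 : ℂ) (hd1 : d1 ≠ 0) (hd2 : d2 ≠ 0) (hd3 : d3 ≠ 0)
    (hz : 1 - z ≠ 0) :
    P * y / (d1 * d2 * d3) + P * y * z / (d1 * d2 * (d3*(1-z)))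
      = P * y / (d1 * d2 * (d3 * (1-z))) := by
  have hD : d1 * d2 * (d3 * (1-z)) ≠ 0 :=
    mul_ne_zero (mul_ne_zero hd1 hd2) (mul_ne_zero hd3 hz)
  have hD' : d1 * d2 * d3 ≠ 0 := mul_ne_zero (mul_ne_zero hd1 hd2) hd3
  have h1 : P * y / (d1 * d2 * d3) = P * y * (1-z) / (d1 * d2 * (d3 * (1-z))) := by
    rw [div_eq_div_iff hD' hD]; ring
  rw [h1, ← add_div]
  congr 1
  ring

lemma comb_alg' (P y z u d1 d2 d3 : ℂ) (hd1 : d1 ≠ 0) (hd2 : d2 ≠ 0) (hd3 : d3 ≠ 0)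
    (hu : 1 - u ≠ 0) (hz : 1 - z ≠ 0) :
    P * y * (1-u) / (d1 * (1-u) * d2 * d3) + P * y * z / (d1 * d2 * (d3*(1-z)))
      = P * y / (d1 * d2 * (d3 * (1-z))) := by
  have h0 : P * y * (1-u) / (d1 * (1-u) * d2 * d3) = P * y / (d1 * d2 * d3) := by
    rw [div_eq_div_iff
      (mul_ne_zero (mul_ne_zero (mul_ne_zero hd1 hu) hd2) hd3)
      (mul_ne_zero (mul_ne_zero hd1 hd2) hd3)]
    ring
  rw [h0]
  exact comb_alg P y z d1 d2 d3 hd1 hd2 hd3 hz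

lemma key {q : ℂ} (hq1 : ‖q‖ < 1) (N : ℕ) :
    ∀ b : ℂ, (∀ m : ℕ, 1 ≤ m → b * q ^ m ≠ 1) →
    ∑ k ∈ range (N+1), b^k * q^(k^2) /
        (qPoch q q (N-k) * qPoch q q k * qPoch (b*q) q k)
      = 1 / (qPoch q q N * qPoch (b*q) q N) := by
  induction N with
  | zero => intro b hb; simp [qPoch_zero]
  | succ N IH =>
    intro b hb
    have hbq : ∀ m : ℕ, 1 ≤ m → (b*q) * q ^ m ≠ 1 := by
      intro m hm hh
      exact hb (m+1) (by omega) (by rw [pow_succ]; linear_combination hh)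
    have hcne : (1:ℂ) - q^(N+1) ≠ 0 := one_sub_q_pow_ne hq1 (by omega)
    have hbq1 : (1:ℂ) - b * q ≠ 0 := by
      have := one_sub_b_ne hb 1 le_rfl; rwa [pow_one] at this
    have E1 : (1 - q^(N+1)) *
        (∑ k ∈ range (N+1+1), b^k * q^(k^2) /
          (qPoch q q (N+1-k) * qPoch q q k * qPoch (b*q) q k))
        = ∑ k ∈ range (N+1),
            (b^k * q^(k^2) * q^k * (1 - q^(N+1-k)) /
              (qPoch q q (N+1-k) * qPoch q q k * qPoch (b*q) q k)
            + b^(k+1) * q^((k+1)^2) /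
              (qPoch q q (N-k) * qPoch q q k * qPoch (b*q) q (k+1))) := by
      rw [Finset.mul_sum, Finset.sum_range_succ']
      have hA : ∀ k ∈ range (N+1),
          (1 - q^(N+1)) * (b^(k+1) * q^((k+1)^2) /
            (qPoch q q (N+1-(k+1)) * qPoch q q (k+1) * qPoch (b*q) q (k+1)))
          = (b^(k+1) * q^((k+1)^2) * q^(k+1) * (1 - q^(N+1-(k+1))) /
              (qPoch q q (N+1-(k+1)) * qPoch q q (k+1) * qPoch (b*q) q (k+1)))
            + b^(k+1) * q^((k+1)^2) /
              (qPoch q q (N-k) * qPoch q q k * qPoch (b*q) q (k+1)) := by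
        intro k hk
        have hkN : k ≤ N := Nat.lt_succ_iff.mp (mem_range.mp hk)
        have hidx : N + 1 - (k+1) = N - k := by omega
        rw [hidx]
        have hq' : q ^ (N+1) = q^(N-k) * q^(k+1) := by
          rw [← pow_add]; congr 1; omega
        rw [hq', qPoch_succ q q k]
        have hqq : (1 : ℂ) - q * q ^ k = 1 - q ^ (k+1) := by rw [pow_succ]; ring
        rw [hqq]
        exact pascal_alg _ _ _ _ _ _ (qq_ne hq1 (N-k)) (qq_ne hq1 k)
          (bq_ne hb (k+1)) (one_sub_q_pow_ne hq1 (by omega))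
      rw [Finset.sum_congr rfl hA]
      have hB : (1 - q^(N+1)) * (b^0 * q^(0^2) /
            (qPoch q q (N+1-0) * qPoch q q 0 * qPoch (b*q) q 0))
          = b^0 * q^(0^2) * q^0 * (1 - q^(N+1-0)) /
              (qPoch q q (N+1-0) * qPoch q q 0 * qPoch (b*q) q 0) := by
        simp only [Nat.sub_zero]; ring
      rw [hB, Finset.sum_add_distrib, Finset.sum_add_distrib]
      have hU : (∑ k ∈ range (N+1),
            b^(k+1) * q^((k+1)^2) * q^(k+1) * (1 - q^(N+1-(k+1))) /
              (qPoch q q (N+1-(k+1)) * qPoch q q (k+1) * qPoch (b*q) q (k+1)))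
          + b^0 * q^(0^2) * q^0 * (1 - q^(N+1-0)) /
              (qPoch q q (N+1-0) * qPoch q q 0 * qPoch (b*q) q 0)
          = ∑ k ∈ range (N+1),
              b^k * q^(k^2) * q^k * (1 - q^(N+1-k)) /
                (qPoch q q (N+1-k) * qPoch q q k * qPoch (b*q) q k) := by
        rw [← Finset.sum_range_succ' (fun k => b^k * q^(k^2) * q^k * (1 - q^(N+1-k)) /
            (qPoch q q (N+1-k) * qPoch q q k * qPoch (b*q) q k)) (N+1),
          Finset.sum_range_succ]
        simp
      linear_combination hU
    have E2 : ∀ k ∈ range (N+1),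
        (b^k * q^(k^2) * q^k * (1 - q^(N+1-k)) /
            (qPoch q q (N+1-k) * qPoch q q k * qPoch (b*q) q k)
          + b^(k+1) * q^((k+1)^2) /
            (qPoch q q (N-k) * qPoch q q k * qPoch (b*q) q (k+1)))
        = (1 - b*q)⁻¹ * ((b*q)^k * q^(k^2) /
            (qPoch q q (N-k) * qPoch q q k * qPoch (b*q*q) q k)) := by
      intro k hk
      have hkN : k ≤ N := Nat.lt_succ_iff.mp (mem_range.mp hk)
      have h1 : qPoch q q (N+1-k) = qPoch q q (N-k) * (1 - q^(N+1-k)) := by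
        have e : N+1-k = (N-k)+1 := by omega
        rw [e, qPoch_succ, pow_succ']
      have h2 : qPoch (b*q) q (k+1) = qPoch (b*q) q k * (1 - b*q^(k+1)) := by
        rw [qPoch_succ, pow_succ]; ring
      have h3 : b^(k+1) * q^((k+1)^2) = b^k * q^(k^2) * q^k * (b * q^(k+1)) := by
        have e : (k+1)^2 = k^2 + k + (k+1) := by ring
        rw [e, pow_add, pow_add, pow_succ, pow_succ]; ring
      rw [h1, h2, h3]
      rw [comb_alg' (b^k * q^(k^2)) (q^k) (b*q^(k+1)) (q^(N+1-k)) _ _ _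
        (qq_ne hq1 (N-k)) (qq_ne hq1 k) (bq_ne hb k)
        (one_sub_q_pow_ne hq1 (by omega)) (one_sub_b_ne hb (k+1) (by omega))]
      rw [← h2, qPoch_succ' (b*q) q k, mul_pow]
      have hden1 : qPoch q q (N-k) * qPoch q q k * ((1 - b*q) * qPoch (b*q*q) q k) ≠ 0 :=
        mul_ne_zero (mul_ne_zero (qq_ne hq1 (N-k)) (qq_ne hq1 k))
          (mul_ne_zero hbq1 (bq_ne hbq k))
      have hden2 : qPoch q q (N-k) * qPoch q q k * qPoch (b*q*q) q k ≠ 0 :=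
        mul_ne_zero (mul_ne_zero (qq_ne hq1 (N-k)) (qq_ne hq1 k)) (bq_ne hbq k)
      rw [inv_mul_eq_div, div_div]
      rw [div_eq_div_iff hden1 (by exact mul_ne_zero hden2 hbq1)]
      ring
    have E3 : (1 - q^(N+1)) *
        (∑ k ∈ range (N+1+1), b^k * q^(k^2) /
          (qPoch q q (N+1-k) * qPoch q q k * qPoch (b*q) q k))
        = (1 - b*q)⁻¹ * (1/(qPoch q q N * qPoch (b*q*q) q N)) := by
      rw [E1, Finset.sum_congr rfl E2, ← Finset.mul_sum, IH (b*q) hbq]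
    rw [qPoch_succ q q N, qPoch_succ' (b*q) q N]
    apply mul_left_cancel₀ hcne
    rw [E3]
    have hPN := qq_ne hq1 N
    have hXN := bq_ne hbq N
    have hqn : (1:ℂ) - q * q^N = 1 - q^(N+1) := by rw [pow_succ]; ring
    rw [hqn]
    field_simp


theorem forward_move_F1 (q a : ℂ) (hq0 : 0 < ‖q‖) (hq1 : ‖q‖ < 1)
    (ha : ∀ m : ℕ, 1 ≤ m → a * q ^ m ≠ 1)
    (α β : ℕ → ℂ) (h : IsBaileyPair q a α β) :
    IsBaileyPair q a
      (fun n => a ^ n * q ^ (n ^ 2) * α n)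
      (fun n => ∑ j ∈ Finset.range (n + 1),
        a ^ j * q ^ (j ^ 2) / qPoch q q (n - j) * β j) := by
  intro n
  simp only []
  -- substitute the Bailey pair relation and expand
  have step1 : ∑ j ∈ Finset.range (n + 1),
        a ^ j * q ^ (j ^ 2) / qPoch q q (n - j) * β j
      = ∑ j ∈ Finset.range (n + 1), ∑ t ∈ Finset.range (j + 1),
          a ^ j * q ^ (j ^ 2) / qPoch q q (n - j) *
            (α t / (qPoch q q (j - t) * qPoch (a * q) q (j + t))) := by
    refine Finset.sum_congr rfl fun j _ => ?_
    rw [h j, Finset.mul_sum]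
  rw [step1]
  -- swap the order of summation
  rw [Finset.sum_comm' (t' := Finset.range (n+1)) (s' := fun t => Finset.Ico t (n+1))
    (by intro j t; simp only [Finset.mem_range, Finset.mem_Ico]; omega)]
  refine Finset.sum_congr rfl fun t ht => ?_
  have htn : t ≤ n := Nat.lt_succ_iff.mp (Finset.mem_range.mp ht)
  rw [Finset.sum_Ico_eq_sum_range]
  have hnt : n + 1 - t = (n - t) + 1 := by omega
  rw [hnt]
  -- hypotheses for key
  have hb : ∀ m : ℕ, 1 ≤ m → (a * q ^ (2*t)) * q ^ m ≠ 1 := by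
    intro m hm hh
    exact ha (2*t + m) (by omega) (by rw [pow_add]; linear_combination hh)
  have hS : qPoch (a*q) q (2*t) ≠ 0 := bq_ne ha (2*t)
  have hbqt : (a*q) * q^(2*t) = (a * q^(2*t)) * q := by ring
  -- rewrite each term
  have step2 : ∀ k ∈ Finset.range ((n-t)+1),
      a ^ (t + k) * q ^ ((t + k) ^ 2) / qPoch q q (n - (t + k)) *
        (α t / (qPoch q q (t + k - t) * qPoch (a * q) q (t + k + t)))
      = (a ^ t * q ^ (t ^ 2) * α t / qPoch (a*q) q (2*t)) *
          ((a * q^(2*t))^k * q^(k^2) /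
            (qPoch q q ((n-t) - k) * qPoch q q k * qPoch ((a * q^(2*t)) * q) q k)) := by
    intro k hk
    have hkn : k ≤ n - t := Nat.lt_succ_iff.mp (Finset.mem_range.mp hk)
    have i1 : t + k - t = k := by omega
    have i2 : n - (t + k) = (n - t) - k := by omega
    have i3 : t + k + t = 2*t + k := by omega
    rw [i1, i2, i3, qPoch_add (a*q) q (2*t) k, hbqt]
    have hnum : a ^ (t + k) * q ^ ((t + k) ^ 2)
        = a ^ t * q ^ (t ^ 2) * ((a * q^(2*t))^k * q^(k^2)) := by
      have e : (t + k)^2 = t^2 + 2*t*k + k^2 := by ring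
      rw [e, pow_add, pow_add, pow_add, mul_pow, pow_mul]
      ring
    have hQ1 : qPoch q q ((n-t) - k) ≠ 0 := qq_ne hq1 _
    have hQ2 : qPoch q q k ≠ 0 := qq_ne hq1 k
    have hZ : qPoch ((a * q^(2*t)) * q) q k ≠ 0 := bq_ne hb k
    rw [div_mul_div_comm, div_mul_div_comm]
    rw [div_eq_div_iff
      (mul_ne_zero hQ1 (mul_ne_zero hQ2 (mul_ne_zero hS hZ)))
      (mul_ne_zero hS (mul_ne_zero (mul_ne_zero hQ1 hQ2) hZ))]
    linear_combination (α t * (qPoch q q ((n-t)-k) * qPoch q q k * qPoch (a*q) q (2*t) *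
      qPoch ((a * q^(2*t)) * q) q k)) * hnum
  rw [Finset.sum_congr rfl step2, ← Finset.mul_sum, key hq1 (n-t) (a * q^(2*t)) hb]
  -- recombine the Pochhammer symbols
  have hsplit : qPoch (a*q) q (n + t) = qPoch (a*q) q (2*t) * qPoch ((a * q^(2*t)) * q) q (n-t) := by
    have e : n + t = 2*t + (n - t) := by omega
    rw [e, qPoch_add (a*q) q (2*t) (n-t), hbqt]
  rw [hsplit]
  rw [div_mul_div_comm, mul_one]
  congr 1
  ring
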